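/- The subgroup of SO(3) generated by a rotation of order 2 about the z-axis and a rotation of order n about the x-axis is finite, for every n ≥ 1. -/

import Mathlib

open Matrix Real

/-- The subgroup `G(2,n)` of `SO(3)` generated by a rotation of order `2` (angle `2π/2`)
about the z-axis and a rotation of order `n` (angle `2π/n`) about the x-axis is finite,
for every `n ≥ 1`. -/
theorem G2n_finite (n : ℕ) (hn : 1 ≤ n) (A B : Matrix.orthogonalGroup (Fin 3) ℝ)
    (hA : (A : Matrix (Fin 3) (Fin 3) ℝ) =
      !![cos (2*π/2), -sin (2*π/2), 0; sin (2*π/2), cos (2*π/2), 0; 0, 0, 1])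
    (hB : (B : Matrix (Fin 3) (Fin 3) ℝ) =
      !![1, 0, 0; 0, cos (2*π/n), -sin (2*π/n); 0, sin (2*π/n), cos (2*π/n)]) :
    (Subgroup.closure {A, B} : Set (Matrix.orthogonalGroup (Fin 3) ℝ)).Finite := by
  have hn0 : (n : ℝ) ≠ 0 := Nat.cast_ne_zero.mpr (by omega)
  have hA' : (A : Matrix (Fin 3) (Fin 3) ℝ) = !![-1,0,0;0,-1,0;0,0,1] := by
    rw [hA]; norm_num [Real.cos_pi, Real.sin_pi]
  set θ : ℝ := 2*π/n with hθ
  have hA2 : A * A = 1 := by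
    apply Subtype.coe_injective
    push_cast [hA']
    rw [Matrix.mul_fin_three]
    norm_num
    exact (Matrix.one_fin_three).symm
  have hBk : ∀ k : ℕ, ((B^k : _) : Matrix (Fin 3) (Fin 3) ℝ) =
      !![1, 0, 0; 0, cos (k*θ), -sin (k*θ); 0, sin (k*θ), cos (k*θ)] := by
    intro k
    induction k with
    | zero => simp [Matrix.one_fin_three]
    | succ k ih =>
      rw [pow_succ]
      push_cast [ih, hB]
      rw [Matrix.mul_fin_three]
      rw [add_mul, one_mul, Real.cos_add, Real.sin_add]
      norm_num
      ring_nf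
      exact ⟨trivial, trivial⟩
  have hBn : B ^ n = 1 := by
    apply Subtype.coe_injective
    push_cast [hBk n]
    have h2 : (n:ℝ) * θ = 2*π := by rw [hθ]; field_simp
    rw [h2]
    norm_num [Real.cos_two_pi, Real.sin_two_pi]
    exact (Matrix.one_fin_three).symm
  have hBAB : B * A * B = A := by
    apply Subtype.coe_injective
    push_cast [hA', hB]
    rw [Matrix.mul_fin_three]
    rw [Matrix.mul_fin_three]
    norm_num
    have h1 := Real.sin_sq_add_cos_sq θ
    have e2 : -(cos θ * cos θ) + -(sin θ * sin θ) = -1 := by nlinarith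
    have e3 : cos θ * sin θ + -(sin θ * cos θ) = 0 := by ring
    have e4 : -(sin θ * cos θ) + cos θ * sin θ = 0 := by ring
    have e5 : sin θ * sin θ + cos θ * cos θ = 1 := by nlinarith
    rw [e2, e3, e4, e5]
    simp
  have hAinv : A⁻¹ = A := inv_eq_of_mul_eq_one_right hA2
  have hBinv : B⁻¹ = B ^ (n-1) := by
    symm; apply eq_inv_of_mul_eq_one_left
    rw [← pow_succ]
    have h3 : n - 1 + 1 = n := by omega
    rw [h3, hBn]
  have hBA : B * A = A * B⁻¹ := by
    have h4 : B * A * B = A * B⁻¹ * B := by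
      rw [hBAB, mul_assoc, inv_mul_cancel, mul_one]
    exact mul_right_cancel h4
  have key : ∀ j : ℕ, B^j * A = A * B^((n-1)*j) := by
    intro j
    induction j with
    | zero => simp
    | succ j ih =>
      have e : (n-1)*j + (n-1) = (n-1)*(j+1) := by ring
      rw [pow_succ, mul_assoc, hBA, ← mul_assoc, ih, mul_assoc, hBinv, ← pow_add, e]
  have key2 : ∀ k j : ℕ, B^j * A^k = A^k * B^((n-1)^k * j) := by
    intro k
    induction k with
    | zero => simp
    | succ k ih =>
      intro j
      have e : (n-1)*((n-1)^k * j) = (n-1)^(k+1) * j := by ring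
      rw [pow_succ, ← mul_assoc, ih j, mul_assoc, key, e, ← mul_assoc, ← pow_succ]
  -- every element of the closure has the form A^i * B^j
  have main : ∀ x ∈ Subgroup.closure ({A, B} : Set (Matrix.orthogonalGroup (Fin 3) ℝ)),
      ∃ i j : ℕ, x = A^i * B^j := by
    intro x hx
    induction hx using Subgroup.closure_induction with
    | mem x hx =>
      rcases hx with h | h
      · exact ⟨1, 0, by simp [h]⟩
      · simp only [Set.mem_singleton_iff] at h
        exact ⟨0, 1, by simp [h]⟩
    | one => exact ⟨0, 0, by simp⟩
    | mul x y hx hy ihx ihy =>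
      obtain ⟨i, j, rfl⟩ := ihx
      obtain ⟨k, l, rfl⟩ := ihy
      refine ⟨i + k, (n-1)^k * j + l, ?_⟩
      rw [mul_assoc, ← mul_assoc (B^j), key2, pow_add, pow_add, mul_assoc, mul_assoc]
    | inv x hx ihx =>
      obtain ⟨i, j, rfl⟩ := ihx
      refine ⟨i, (n-1)^i * ((n-1) * j), ?_⟩
      rw [_root_.mul_inv_rev, ← inv_pow, ← inv_pow, hAinv, hBinv, ← pow_mul, key2]
  -- hence the closure is contained in a finite set
  apply Set.Finite.subset (Set.finite_range (fun p : Fin 2 × Fin n => A^(p.1:ℕ) * B^(p.2:ℕ)))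
  intro x hx
  obtain ⟨i, j, rfl⟩ := main x hx
  refine ⟨(⟨i % 2, Nat.mod_lt _ (by norm_num)⟩, ⟨j % n, Nat.mod_lt _ (by omega)⟩), ?_⟩
  simp only
  have hAi : A ^ i = A ^ (i % 2) := by
    conv_lhs => rw [← Nat.div_add_mod i 2]
    rw [pow_add, pow_mul, show A^2 = 1 by rw [pow_two, hA2], one_pow, one_mul]
  have hBj : B ^ j = B ^ (j % n) := by
    conv_lhs => rw [← Nat.div_add_mod j n]
    rw [pow_add, pow_mul, hBn, one_pow, one_mul]
  rw [hAi, hBj]
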